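/- Let T > 0, C > 0 and α₁ > 0, and define g(x) := x + x^{3/2} for x ≥ 0 and G(x) := log(1 + 1/√x) for x > 0. Suppose e, d : [0, T) → [0, ∞) are continuous, e is continuously differentiable, and e′(t) + d(t) ≤ C·g(e(t)) for all t ∈ (0, T). Suppose 0 ≤ t₁ < t₂ < T satisfy e(t₁) ≤ α₁ and t₂ − t₁ ≤ min(1, G(α₁))/C. Then for every m > 0 satisfying G(m) = G(α₁)/2, one has e(t) ≤ m for all t ∈ [t₁, t₂], and ∫_{t₁}^{t₂} d(s) ds ≤ α₁ + g(m). -/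

import Mathlib

/-- `g(x) = x + x^{3/2}`. -/
noncomputable def gBihari (x : ℝ) : ℝ := x + x ^ ((3 : ℝ) / 2)

/-- `G(x) = log(1 + 1/√x)`. -/
noncomputable def GBihari (x : ℝ) : ℝ := Real.log (1 + 1 / Real.sqrt x)

lemma gB_pos {x : ℝ} (hx : 0 < x) : 0 < gBihari x :=
  add_pos hx (Real.rpow_pos_of_pos hx _)

lemma gB_nonneg {x : ℝ} (hx : 0 ≤ x) : 0 ≤ gBihari x :=
  add_nonneg hx (Real.rpow_nonneg hx _)

lemma gB_mono {x y : ℝ} (hx : 0 ≤ x) (hxy : x ≤ y) : gBihari x ≤ gBihari y :=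
  add_le_add hxy (Real.rpow_le_rpow hx hxy (by norm_num))

lemma GB_pos {x : ℝ} (hx : 0 < x) : 0 < GBihari x := by
  have h : 0 < 1 / Real.sqrt x := by positivity
  exact Real.log_pos (by linarith)

lemma GB_anti {x y : ℝ} (hx : 0 < x) (hxy : x < y) : GBihari y < GBihari x := by
  have h1 : Real.sqrt x < Real.sqrt y := Real.sqrt_lt_sqrt hx.le hxy
  have h2 : 0 < Real.sqrt x := Real.sqrt_pos.2 hx
  have h3 : 1 / Real.sqrt y < 1 / Real.sqrt x := one_div_lt_one_div_of_lt h2 h1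
  have hy : 0 < y := hx.trans hxy
  have hsy : 0 < Real.sqrt y := Real.sqrt_pos.2 hy
  have h4 : 0 < 1 / Real.sqrt y := by positivity
  exact Real.log_lt_log (by linarith) (by linarith)

lemma GB_cont : ContinuousOn GBihari (Set.Ioi 0) := by
  apply ContinuousOn.log
  · exact continuousOn_const.add (continuousOn_const.div
      (Real.continuous_sqrt.continuousOn) (fun x hx => by
        exact ne_of_gt (Real.sqrt_pos.2 hx)))
  · intro x hx
    have hx' : (0:ℝ) < x := hx
    have hsx : 0 < Real.sqrt x := Real.sqrt_pos.2 hx'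
    have : 0 < 1 / Real.sqrt x := by positivity
    linarith

lemma hasDerivAt_negG {x : ℝ} (hx : 0 < x) :
    HasDerivAt (fun y => -2 * GBihari y) (1 / gBihari x) x := by
  have hs : 0 < Real.sqrt x := Real.sqrt_pos.2 hx
  have h1 : HasDerivAt Real.sqrt (1 / (2 * Real.sqrt x)) x := Real.hasDerivAt_sqrt hx.ne'
  have h2 : HasDerivAt (fun y => (Real.sqrt y)⁻¹)
      (-(1 / (2 * Real.sqrt x)) / (Real.sqrt x) ^ 2) x := h1.inv hs.ne'
  have h3 : HasDerivAt (fun y => 1 + 1 / Real.sqrt y)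
      (-(1 / (2 * Real.sqrt x)) / (Real.sqrt x) ^ 2) x := by
    simpa [one_div] using h2
  have hpos : 0 < 1 + 1 / Real.sqrt x := by positivity
  have h4 : HasDerivAt (fun y => GBihari y)
      ((-(1 / (2 * Real.sqrt x)) / (Real.sqrt x) ^ 2) / (1 + 1 / Real.sqrt x)) x :=
    h3.log hpos.ne'
  have h5 := h4.const_mul (-2 : ℝ)
  refine h5.congr_deriv ?_
  symm
  have hsq : Real.sqrt x ^ 2 = x := Real.sq_sqrt hx.le
  have hrpow : x ^ ((3:ℝ)/2) = x * Real.sqrt x := by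
    rw [show (3:ℝ)/2 = 1 + 1/2 by norm_num, Real.rpow_add hx, Real.rpow_one,
      ← Real.sqrt_eq_rpow]
  rw [gBihari]
  rw [hrpow]
  field_simp
  ring_nf
  linear_combination (1 + Real.sqrt x) * hsq

/-- The local-in-time Bihari argument on a subinterval: if `e′(t) + d(t) ≤ C·g(e(t))`
on `(0, T)`, `e(t₁) ≤ α₁` and `t₂ − t₁ ≤ min(1, G(α₁))/C`, then for any `m > 0` with
`G(m) = G(α₁)/2` one has `e ≤ m` on `[t₁, t₂]` and `∫_{t₁}^{t₂} d ≤ α₁ + g(m)`. -/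
theorem bihari_local_in_time (T C α₁ : ℝ) (hT : 0 < T) (hC : 0 < C) (hα₁ : 0 < α₁)
    (e d e' : ℝ → ℝ)
    (he_cont : ContinuousOn e (Set.Ico 0 T))
    (hd_cont : ContinuousOn d (Set.Ico 0 T))
    (he_nonneg : ∀ t ∈ Set.Ico (0 : ℝ) T, 0 ≤ e t)
    (hd_nonneg : ∀ t ∈ Set.Ico (0 : ℝ) T, 0 ≤ d t)
    (he_deriv : ∀ t ∈ Set.Ico (0 : ℝ) T, HasDerivWithinAt e (e' t) (Set.Ico 0 T) t)
    (he'_cont : ContinuousOn e' (Set.Ico 0 T))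
    (hode : ∀ t ∈ Set.Ioo (0 : ℝ) T, e' t + d t ≤ C * gBihari (e t))
    (t₁ t₂ : ℝ) (ht₁ : 0 ≤ t₁) (ht₁₂ : t₁ < t₂) (ht₂ : t₂ < T)
    (he_t₁ : e t₁ ≤ α₁)
    (hgap : t₂ - t₁ ≤ min 1 (GBihari α₁) / C) :
    ∀ m, 0 < m → GBihari m = GBihari α₁ / 2 →
      (∀ t ∈ Set.Icc t₁ t₂, e t ≤ m) ∧
        (∫ s in t₁..t₂, d s) ≤ α₁ + gBihari m := by
  intro m hm hGm
  have hGα : 0 < GBihari α₁ := GB_pos hα₁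
  have hα₁m : α₁ < m := by
    by_contra h
    push_neg at h
    rcases eq_or_lt_of_le h with he | hlt
    · rw [he] at hGm; linarith
    · have := GB_anti hm hlt; linarith
  have hsub : Set.Icc t₁ t₂ ⊆ Set.Ico 0 T :=
    fun s hs => ⟨ht₁.trans hs.1, lt_of_le_of_lt hs.2 ht₂⟩
  have hCgap : C * (t₂ - t₁) ≤ min 1 (GBihari α₁) := by
    rw [mul_comm]
    exact (le_div_iff₀ hC).1 hgap
  -- Part 1
  have key : ∀ t ∈ Set.Icc t₁ t₂, e t ≤ m := by
    intro t ht
    by_cases hcase : e t ≤ α₁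
    · linarith
    push_neg at hcase
    have htt₁ : t₁ < t := by
      rcases eq_or_lt_of_le ht.1 with h | h
      · exact absurd he_t₁ (by rw [h]; exact not_le.2 hcase)
      · exact h
    have hIccsub : Set.Icc t₁ t ⊆ Set.Ico 0 T :=
      fun s hs => ⟨ht₁.trans hs.1, lt_of_le_of_lt (hs.2.trans ht.2) ht₂⟩
    set S : Set ℝ := Set.Icc t₁ t ∩ e ⁻¹' Set.Iic α₁ with hSdef
    have hScl : IsClosed S :=
      (he_cont.mono hIccsub).preimage_isClosed_of_isClosed isClosed_Icc isClosed_Iic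
    have hSne : S.Nonempty := ⟨t₁, ⟨le_refl _, htt₁.le⟩, he_t₁⟩
    have hSbdd : BddAbove S := ⟨t, fun s hs => hs.1.2⟩
    set σ := sSup S with hσdef
    have hσS : σ ∈ S := hScl.csSup_mem hSne hSbdd
    have hσ₁ : t₁ ≤ σ := hσS.1.1
    have hσt : σ ≤ t := hσS.1.2
    have hgt : ∀ s, σ < s → s ≤ t → α₁ < e s := by
      intro s h1 h2
      by_contra h; push_neg at h
      have hsS : s ∈ S := ⟨⟨hσ₁.trans h1.le, h2⟩, h⟩
      exact absurd (le_csSup hSbdd hsS) (not_le.2 h1)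
    have hσlt : σ < t := by
      rcases eq_or_lt_of_le hσt with h | h
      · exact absurd hσS.2 (by rw [h]; exact not_le.2 hcase)
      · exact h
    have heσ : α₁ ≤ e σ := by
      have hc : ContinuousWithinAt e (Set.Ioc σ t) σ :=
        (he_cont σ (hIccsub ⟨hσ₁, hσt⟩)).mono
          (fun s hs => ⟨(ht₁.trans hσ₁).trans hs.1.le,
            lt_of_le_of_lt (hs.2.trans ht.2) ht₂⟩)
      have hne : (nhdsWithin σ (Set.Ioc σ t)).NeBot := by
        rw [nhdsWithin_Ioc_eq_nhdsGT hσlt]; infer_instance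
      exact ge_of_tendsto hc
        (eventually_mem_nhdsWithin.mono (fun s hs => (hgt s hs.1 hs.2).le))
    have heσ' : e σ = α₁ := le_antisymm hσS.2 heσ
    have hepos : ∀ s ∈ Set.Icc σ t, α₁ ≤ e s := by
      intro s hs
      rcases eq_or_lt_of_le hs.1 with h | h
      · rw [← h]; exact heσ
      · exact (hgt s h hs.2).le
    set ψ : ℝ → ℝ := fun s => -2 * GBihari (e s) - C * s with hψdef
    have hψcont : ContinuousOn ψ (Set.Icc σ t) := by
      apply ContinuousOn.sub
      · apply ContinuousOn.mul continuousOn_const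
        apply GB_cont.comp ((he_cont.mono (fun s hs => hIccsub ⟨hσ₁.trans hs.1, hs.2⟩)))
        · intro s hs
          exact lt_of_lt_of_le hα₁ (hepos s hs)
      · exact (continuous_const.mul continuous_id).continuousOn
    have hψd : ∀ s ∈ interior (Set.Icc σ t),
        HasDerivWithinAt ψ (e' s / gBihari (e s) - C) (interior (Set.Icc σ t)) s := by
      intro s hs
      rw [interior_Icc] at hs
      have hsIoo : s ∈ Set.Ioo (0:ℝ) T :=
        ⟨lt_of_le_of_lt (ht₁.trans hσ₁) hs.1, lt_of_lt_of_le hs.2 (ht.2.trans_lt ht₂).le⟩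
      have hmem : Set.Ico (0:ℝ) T ∈ nhds s :=
        mem_nhds_iff.2 ⟨Set.Ioo 0 T, Set.Ioo_subset_Ico_self, isOpen_Ioo, hsIoo⟩
      have hde : HasDerivAt e (e' s) s :=
        (he_deriv s ⟨hsIoo.1.le, hsIoo.2⟩).hasDerivAt hmem
      have hes : 0 < e s := lt_of_lt_of_le hα₁ (hepos s ⟨hs.1.le, hs.2.le⟩)
      have h1 : HasDerivAt (fun y => -2 * GBihari (e y)) (1 / gBihari (e s) * e' s) s :=
        (hasDerivAt_negG hes).comp s hde
      have h2 : HasDerivAt (fun y : ℝ => C * y) C s := by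
        simpa using (hasDerivAt_id s).const_mul C
      have h3 := h1.sub h2
      have : 1 / gBihari (e s) * e' s - C = e' s / gBihari (e s) - C := by
        field_simp
      rw [this] at h3
      exact h3.hasDerivWithinAt
    have hψ0 : ∀ s ∈ interior (Set.Icc σ t), e' s / gBihari (e s) - C ≤ 0 := by
      intro s hs
      rw [interior_Icc] at hs
      have hsIoo : s ∈ Set.Ioo (0:ℝ) T :=
        ⟨lt_of_le_of_lt (ht₁.trans hσ₁) hs.1, lt_of_lt_of_le hs.2 (ht.2.trans_lt ht₂).le⟩
      have hes : 0 < e s := lt_of_lt_of_le hα₁ (hepos s ⟨hs.1.le, hs.2.le⟩)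
      have hgpos : 0 < gBihari (e s) := gB_pos hes
      have hd0 := hd_nonneg s ⟨hsIoo.1.le, hsIoo.2⟩
      have hod := hode s hsIoo
      have : e' s / gBihari (e s) ≤ C := (div_le_iff₀ hgpos).2 (by linarith)
      linarith
    have hanti : AntitoneOn ψ (Set.Icc σ t) :=
      antitoneOn_of_hasDerivWithinAt_nonpos (convex_Icc σ t) hψcont hψd hψ0
    have hψt : ψ t ≤ ψ σ :=
      hanti ⟨le_refl σ, hσlt.le⟩ ⟨hσlt.le, le_refl t⟩ hσlt.le
    have hGet : GBihari m ≤ GBihari (e t) := by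
      have h1 : -2 * GBihari (e t) - C * t ≤ -2 * GBihari α₁ - C * σ := by
        simpa [hψdef, heσ'] using hψt
      have h2 : C * (t - σ) ≤ C * (t₂ - t₁) :=
        mul_le_mul_of_nonneg_left (by linarith [ht.2, hσ₁]) hC.le
      have h3 : min 1 (GBihari α₁) ≤ GBihari α₁ := min_le_right _ _
      have : -2 * GBihari (e t) ≤ -GBihari α₁ := by nlinarith
      rw [hGm]; linarith
    by_contra h
    push_neg at h
    exact absurd hGet (not_le.2 (GB_anti hm h))
  refine ⟨key, ?_⟩
  -- Part 2
  have hec : ContinuousOn e (Set.Icc t₁ t₂) := he_cont.mono hsub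
  have hdc : ContinuousOn d (Set.Icc t₁ t₂) := hd_cont.mono hsub
  have he'c : ContinuousOn e' (Set.Icc t₁ t₂) := he'_cont.mono hsub
  have hgcont : Continuous gBihari := by
    apply continuous_id.add
    exact continuous_iff_continuousAt.2
      (fun x => Real.continuousAt_rpow_const x _ (Or.inr (by norm_num)))
  have hgec : ContinuousOn (fun s => C * gBihari (e s)) (Set.Icc t₁ t₂) :=
    continuousOn_const.mul (hgcont.comp_continuousOn hec)
  have hdint : IntervalIntegrable d MeasureTheory.volume t₁ t₂ :=
    hdc.intervalIntegrable_of_Icc ht₁₂.le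
  have he'int : IntervalIntegrable e' MeasureTheory.volume t₁ t₂ :=
    he'c.intervalIntegrable_of_Icc ht₁₂.le
  have hgeint : IntervalIntegrable (fun s => C * gBihari (e s)) MeasureTheory.volume t₁ t₂ :=
    hgec.intervalIntegrable_of_Icc ht₁₂.le
  have hrhsint : IntervalIntegrable (fun s => C * gBihari (e s) - e' s)
      MeasureTheory.volume t₁ t₂ := hgeint.sub he'int
  have hFTC : (∫ s in t₁..t₂, e' s) = e t₂ - e t₁ := by
    apply intervalIntegral.integral_eq_sub_of_hasDeriv_right_of_le ht₁₂.le hec _ he'int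
    intro x hx
    have hxIoo : x ∈ Set.Ioo (0:ℝ) T := ⟨lt_of_le_of_lt ht₁ hx.1, lt_trans hx.2 ht₂⟩
    have hmem : Set.Ico (0:ℝ) T ∈ nhds x :=
      mem_nhds_iff.2 ⟨Set.Ioo 0 T, Set.Ioo_subset_Ico_self, isOpen_Ioo, hxIoo⟩
    exact ((he_deriv x ⟨hxIoo.1.le, hxIoo.2⟩).hasDerivAt hmem).hasDerivWithinAt
  have hae : ∀ᵐ x ∂(MeasureTheory.volume.restrict (Set.Icc t₁ t₂)),
      d x ≤ C * gBihari (e x) - e' x := by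
    have h0 : ∀ᵐ x ∂(MeasureTheory.volume : MeasureTheory.Measure ℝ), x ≠ t₁ := by
      rw [MeasureTheory.ae_iff]
      simpa using MeasureTheory.measure_singleton t₁
    rw [MeasureTheory.ae_restrict_iff' measurableSet_Icc]
    filter_upwards [h0] with x hx hxI
    have hx1 : t₁ < x := lt_of_le_of_ne hxI.1 (Ne.symm hx)
    have hxIoo : x ∈ Set.Ioo (0:ℝ) T := ⟨lt_of_le_of_lt ht₁ hx1, lt_of_le_of_lt hxI.2 ht₂⟩
    have := hode x hxIoo
    have hd0 := hd_nonneg x ⟨hxIoo.1.le, hxIoo.2⟩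
    linarith
  have step1 : (∫ s in t₁..t₂, d s) ≤ ∫ s in t₁..t₂, (C * gBihari (e s) - e' s) :=
    intervalIntegral.integral_mono_ae_restrict ht₁₂.le hdint hrhsint hae
  have step2 : (∫ s in t₁..t₂, (C * gBihari (e s) - e' s))
      = (∫ s in t₁..t₂, C * gBihari (e s)) - (e t₂ - e t₁) := by
    rw [intervalIntegral.integral_sub hgeint he'int, hFTC]
  have step3 : (∫ s in t₁..t₂, C * gBihari (e s)) ≤ (t₂ - t₁) * (C * gBihari m) := by
    have := intervalIntegral.integral_mono_on ht₁₂.le hgeint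
      (intervalIntegrable_const (c := C * gBihari m))
      (fun x hx => mul_le_mul_of_nonneg_left
        (gB_mono (he_nonneg x (hsub hx)) (key x hx)) hC.le)
    rwa [intervalIntegral.integral_const, smul_eq_mul] at this
  have hgm : 0 ≤ gBihari m := gB_nonneg hm.le
  have h1 : min 1 (GBihari α₁) ≤ 1 := min_le_left _ _
  have het₂ : 0 ≤ e t₂ := he_nonneg t₂ (hsub ⟨ht₁₂.le, le_refl _⟩)
  have : (t₂ - t₁) * (C * gBihari m) ≤ gBihari m := by
    have : C * (t₂ - t₁) ≤ 1 := le_trans hCgap h1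
    nlinarith
  linarith
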